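/- For all Laurent polynomials u, f, g in ℂ[z, z^{−1}], the q-integration-by-parts identity −q·res(u·(τf)·(∂_q g)) = res(g·τ^{−1}(∂_q((τu)·(τ²f)))) holds. -/

import Mathlib

/-- The q-integer `[m] = (q^m - q^(-m))/(q - q⁻¹)`. -/
noncomputable def qInt (q : ℂ) (m : ℤ) : ℂ := (q ^ m - q ^ (-m)) / (q - q⁻¹)

/-- The q-derivative `∂_q` on `ℂ[z,z⁻¹]`: `∂_q z^k = [k]·z^{k−1}`. -/
noncomputable def dq (q : ℂ) : LaurentPolynomial ℂ →ₗ[ℂ] LaurentPolynomial ℂ :=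
  (Finsupp.lsum ℂ fun k : ℤ => qInt q k • AddMonoidAlgebra.lsingle (k - 1)) ∘ₗ
    (AddMonoidAlgebra.coeffLinearEquiv ℂ).toLinearMap

/-- The operator `τ` on `ℂ[z,z⁻¹]`: `τ z^k = q^k·z^k`. -/
noncomputable def tau (q : ℂ) : LaurentPolynomial ℂ →ₗ[ℂ] LaurentPolynomial ℂ :=
  (Finsupp.lsum ℂ fun k : ℤ => q ^ k • AddMonoidAlgebra.lsingle k) ∘ₗ
    (AddMonoidAlgebra.coeffLinearEquiv ℂ).toLinearMap

/-- `τ⁻¹` on `ℂ[z,z⁻¹]`: `τ⁻¹ z^k = q^{−k}·z^k`. -/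
noncomputable def tauInv (q : ℂ) : LaurentPolynomial ℂ →ₗ[ℂ] LaurentPolynomial ℂ :=
  (Finsupp.lsum ℂ fun k : ℤ => q ^ (-k) • AddMonoidAlgebra.lsingle k) ∘ₗ
    (AddMonoidAlgebra.coeffLinearEquiv ℂ).toLinearMap

/-- `res(f)` is the coefficient of `z^{−1}` in `f`. -/
noncomputable def res (f : LaurentPolynomial ℂ) : ℂ := f.coeff (-1)

lemma dq_single' (q : ℂ) (k : ℤ) (c : ℂ) :
    dq q (AddMonoidAlgebra.single k c) = AddMonoidAlgebra.single (k-1) (qInt q k * c) := by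
  rw [dq, LinearMap.comp_apply, LinearEquiv.coe_coe, AddMonoidAlgebra.coeffLinearEquiv_apply,
    AddMonoidAlgebra.coeff_single, Finsupp.lsum_single, LinearMap.smul_apply,
    AddMonoidAlgebra.lsingle_apply, AddMonoidAlgebra.smul_single']

lemma tau_single' (q : ℂ) (k : ℤ) (c : ℂ) :
    tau q (AddMonoidAlgebra.single k c) = AddMonoidAlgebra.single k (q ^ k * c) := by
  rw [tau, LinearMap.comp_apply, LinearEquiv.coe_coe, AddMonoidAlgebra.coeffLinearEquiv_apply,
    AddMonoidAlgebra.coeff_single, Finsupp.lsum_single, LinearMap.smul_apply,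
    AddMonoidAlgebra.lsingle_apply, AddMonoidAlgebra.smul_single']

lemma tauInv_single' (q : ℂ) (k : ℤ) (c : ℂ) :
    tauInv q (AddMonoidAlgebra.single k c) = AddMonoidAlgebra.single k (q ^ (-k) * c) := by
  rw [tauInv, LinearMap.comp_apply, LinearEquiv.coe_coe, AddMonoidAlgebra.coeffLinearEquiv_apply,
    AddMonoidAlgebra.coeff_single, Finsupp.lsum_single, LinearMap.smul_apply,
    AddMonoidAlgebra.lsingle_apply, AddMonoidAlgebra.smul_single']

lemma sms' (a b : ℤ) (c d : ℂ) :
    (AddMonoidAlgebra.single a c : LaurentPolynomial ℂ) * AddMonoidAlgebra.single b d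
      = AddMonoidAlgebra.single (a+b) (c*d) :=
  AddMonoidAlgebra.single_mul_single _ _ _ _

lemma res_single' (k : ℤ) (c : ℂ) :
    res (AddMonoidAlgebra.single k c : LaurentPolynomial ℂ) = if k = -1 then c else 0 := by
  rw [res, AddMonoidAlgebra.coeff_single]; exact Finsupp.single_apply

lemma res_add' (a b : LaurentPolynomial ℂ) : res (a+b) = res a + res b := rfl

lemma res_zero' : res (0 : LaurentPolynomial ℂ) = 0 := rfl

lemma qInt_neg' (q : ℂ) (n : ℤ) : qInt q (-n) = - qInt q n := by
  rw [qInt, qInt, neg_neg, ← neg_div]; ring_nf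

/-- q-integration by parts:
`−q·res(u·(τf)·(∂_q g)) = res(g·τ⁻¹(∂_q((τu)·(τ²f))))`. -/
theorem q_integration_by_parts (q : ℂ) (hq : q ≠ 0) (hq2 : q ^ 2 ≠ 1)
    (u f g : LaurentPolynomial ℂ) :
    -q * res (u * tau q f * dq q g)
      = res (g * tauInv q (dq q (tau q u * tau q (tau q f)))) := by
  induction u using AddMonoidAlgebra.induction_linear with
  | zero => simp [res_zero']
  | add u₁ u₂ h1 h2 =>
      simp only [map_add, add_mul, mul_add, res_add'] at *
      rw [h1, h2]
  | single a c₁ =>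
    induction f using AddMonoidAlgebra.induction_linear with
    | zero => simp [res_zero']
    | add f₁ f₂ h1 h2 =>
        simp only [map_add, add_mul, mul_add, res_add'] at *
        rw [h1, h2]
    | single b c₂ =>
      induction g using AddMonoidAlgebra.induction_linear with
      | zero => simp [res_zero']
      | add g₁ g₂ h1 h2 =>
          simp only [map_add, add_mul, mul_add, res_add'] at *
          rw [h1, h2]
      | single n c₃ =>
        rw [tau_single', tau_single', tau_single', dq_single', sms', sms', sms',
          dq_single', tauInv_single', sms', res_single', res_single']
        by_cases h : a + b + n = 0
        · rw [if_pos (by omega), if_pos (by omega)]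
          have ha : a = -n - b := by omega
          subst ha
          have e1 : (-n - b + b : ℤ) = -n := by ring
          rw [e1, qInt_neg']
          rw [show (-(-n - 1) : ℤ) = n + 1 from by ring]
          simp only [zpow_add₀ hq, zpow_sub₀ hq, zpow_neg, zpow_one]
          field_simp [zpow_ne_zero b hq, zpow_ne_zero n hq]
        · rw [if_neg (by omega), if_neg (by omega)]
          ring
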